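/- The set of Hopfield parameters invariant under all edge-adjacency-preserving permutations is exactly the image of the linear map F: Ψ(Q_n) = F(ℝ³). That is, a parameter θ = (W,b) on n = v(v−1)/2 neurons satisfies Qθ = θ for every Q ∈ Q_n if and only if there exist β₁, β₂, β₃ ∈ ℝ with W_{ij} = 0 when i = j, W_{ij} = β₁ when i ∼ j, W_{ij} = β₂ when i ≠ j and i ≁ j, and b_j = β₃ for all j. -/

import Mathlib

open scoped BigOperators
open scoped Classical
open Matrix MeasureTheory

namespace HopfieldPaper

/-- The space of (not necessarily admissible) Hopfield parameters `θ = (W, b)`. -/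
abbrev Param (n : ℕ) := Matrix (Fin n) (Fin n) ℝ × (Fin n → ℝ)

variable {n : ℕ}

/-- `θ = (W, b)` is a Hopfield parameter: `W` is symmetric with zero diagonal. -/
def IsHopfieldParam (θ : Param n) : Prop :=
  θ.1.IsSymm ∧ ∀ i, θ.1 i i = 0

/-- `x ∈ {0,1}ⁿ`. -/
def IsBinary (x : Fin n → ℝ) : Prop := ∀ i, x i = 0 ∨ x i = 1

/-- Energy `E(x; θ) = (1/2)·xᵀWx + bᵀx`. -/
noncomputable def energy (x : Fin n → ℝ) (θ : Param n) : ℝ :=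
  (1 / 2) * (∑ i, ∑ j, x i * θ.1 i j * x j) + ∑ j, θ.2 j * x j

/-- `x^{(j)}`: the vector differing from `x` exactly in coordinate `j`. -/
noncomputable def flip (x : Fin n → ℝ) (j : Fin n) : Fin n → ℝ :=
  Function.update x j (1 - x j)

/-- The inner product on parameter space.  Under the identification of
`θ = (W, b)` with `ω = (√2·a, b) ∈ ℝ^q` (`a` the strictly upper-triangular
entries of `W`), the Euclidean inner product on `ℝ^q` corresponds to
`⟨θ, η⟩ = Σᵢⱼ Wᵢⱼ·W'ᵢⱼ + Σⱼ bⱼ·b'ⱼ`; in particular `‖ω‖² = ‖W‖_F² + ‖b‖²`. -/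
noncomputable def pInner (θ η : Param n) : ℝ :=
  (∑ i, ∑ j, θ.1 i j * η.1 i j) + ∑ j, θ.2 j * η.2 j

/-- The norm on parameter space: `‖ω‖ = √(‖W‖_F² + ‖b‖²)`. -/
noncomputable def pNorm (θ : Param n) : ℝ := Real.sqrt (pInner θ θ)

/-- The representer `u_j(x)`: the unique element of parameter space with
`⟨u_j(x), θ⟩ = E(x^{(j)}; θ) − E(x; θ)` for every Hopfield parameter `θ`. -/
noncomputable def uvec (x : Fin n → ℝ) (j : Fin n) : Param n :=
  (Matrix.of fun i l =>
      if i = j ∧ l ≠ j then (1 - 2 * x j) * x l / 2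
      else if l = j ∧ i ≠ j then (1 - 2 * x j) * x i / 2
      else 0,
   fun l => if l = j then 1 - 2 * x j else 0)

/-- `‖x‖₀`: the number of nonzero coordinates. -/
noncomputable def l0norm (x : Fin n → ℝ) : ℕ :=
  (Finset.univ.filter fun i => x i ≠ 0).card

/-- Action of a permutation matrix `Q` on parameters: `Qθ := (QᵀWQ, Qᵀb)`. -/
noncomputable def permAct (σ : Equiv.Perm (Fin n)) (θ : Param n) : Param n :=
  ((σ.permMatrix ℝ)ᵀ * θ.1 * σ.permMatrix ℝ, ((σ.permMatrix ℝ)ᵀ).mulVec θ.2)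

/-- `θ ∈ Ψ(Γ)`: `θ` is invariant under (the permutation matrices of) `Γ`. -/
noncomputable def InvariantUnder (Γ : Set (Equiv.Perm (Fin n))) (θ : Param n) : Prop :=
  ∀ σ ∈ Γ, permAct σ θ = θ

/-- `Orb(x, Γ) = {Q·x : Q ∈ Γ}` (`Q` the permutation matrix of `σ ∈ Γ`). -/
noncomputable def orb (Γ : Set (Equiv.Perm (Fin n))) (x : Fin n → ℝ) :
    Set (Fin n → ℝ) :=
  {y | ∃ σ ∈ Γ, y = ((σ.permMatrix ℝ)).mulVec x}

variable {v : ℕ}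

/-- The type of unordered pairs of distinct elements of `Fin v`
(the "unordered pairs of `{1,…,v}`"). -/
abbrev EdgeIdx (v : ℕ) := {p : Sym2 (Fin v) // ¬ p.IsDiag}

/-- The permutation of `Sym2 (Fin v)` induced by a vertex permutation. -/
def sym2Perm (φ : Equiv.Perm (Fin v)) : Equiv.Perm (Sym2 (Fin v)) where
  toFun := Sym2.map φ
  invFun := Sym2.map φ.symm
  left_inv := fun p => by rw [Sym2.map_map]; simp
  right_inv := fun p => by rw [Sym2.map_map]; simp

/-- The induced permutation of unordered pairs of distinct vertices. -/
def offDiagPerm (φ : Equiv.Perm (Fin v)) : Equiv.Perm (EdgeIdx v) :=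
  (sym2Perm φ).subtypePerm (fun p => by
    simp only [sym2Perm, Equiv.coe_fn_mk]
    exact (Sym2.isDiag_map φ.injective).not)

/-- The edge permutation `π_φ` of `{1,…,n}` induced by the vertex permutation
`φ`; it satisfies `π_φ(Ind({a,b})) = Ind({φ(a),φ(b)})`. -/
def edgePerm (Ind : EdgeIdx v ≃ Fin n) (φ : Equiv.Perm (Fin v)) :
    Equiv.Perm (Fin n) :=
  Ind.permCongr (offDiagPerm φ)

/-- `Φ_n`: the set of permutation matrices of vertex-induced edge permutations. -/
noncomputable def PhiSet (Ind : EdgeIdx v ≃ Fin n) :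
    Set (Matrix (Fin n) (Fin n) ℝ) :=
  {P | ∃ φ : Equiv.Perm (Fin v), P = (edgePerm Ind φ).permMatrix ℝ}

/-- The two-element vertex set `Ind⁻¹(j)` of an edge index, as a `Finset`. -/
noncomputable def pairFinset (Ind : EdgeIdx v ≃ Fin n) (j : Fin n) : Finset (Fin v) :=
  Finset.univ.filter (fun a => a ∈ (Ind.symm j : Sym2 (Fin v)))

/-- Edge adjacency: `j ∼ l` iff `|Ind⁻¹(j) ∩ Ind⁻¹(l)| = 1`. -/
noncomputable def edgeAdj (Ind : EdgeIdx v ≃ Fin n) (j l : Fin n) : Prop :=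
  (pairFinset Ind j ∩ pairFinset Ind l).card = 1

/-- A permutation of edge indices preserves edge adjacency. -/
noncomputable def PreservesEdgeAdj (Ind : EdgeIdx v ≃ Fin n)
    (π : Equiv.Perm (Fin n)) : Prop :=
  ∀ j l : Fin n, edgeAdj Ind (π j) (π l) ↔ edgeAdj Ind j l

/-- `Q_n`: the set of permutation matrices of edge-adjacency-preserving
permutations. -/
noncomputable def QSet (Ind : EdgeIdx v ≃ Fin n) :
    Set (Matrix (Fin n) (Fin n) ℝ) :=
  {Q | ∃ π : Equiv.Perm (Fin n), PreservesEdgeAdj Ind π ∧ Q = π.permMatrix ℝ}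

/-- Orbit of a vector under a set of matrices: `Orb(x, Γ) = {P·x : P ∈ Γ}`. -/
noncomputable def morb (Γ : Set (Matrix (Fin n) (Fin n) ℝ)) (x : Fin n → ℝ) :
    Set (Fin n → ℝ) :=
  {y | ∃ P ∈ Γ, y = P.mulVec x}

/-- The linear map `F : ℝ³ → Θ` sending `β` to `(W, b)` with `W_{ij} = 0` if
`i = j`, `W_{ij} = β₁` if `i ∼ j`, `W_{ij} = β₂` if `i ≠ j` and `i ≁ j`, and
`b_j = β₃`. -/
noncomputable def Fmap (Ind : EdgeIdx v ≃ Fin n) (β : ℝ × ℝ × ℝ) : Param n :=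
  (Matrix.of fun i j =>
      if i = j then 0 else if edgeAdj Ind i j then β.1 else β.2.1,
   fun _ => β.2.2)

section Aux
variable {v n : ℕ}

lemma exists_perm_extend_fun {α : Type*} [Fintype α] [DecidableEq α] (s : Finset α)
    (f : α → α) (hf : Set.InjOn f s) : ∃ σ : Equiv.Perm α, ∀ a ∈ s, σ a = f a := by
  classical
  set t := s.image f with ht
  have hcardst : s.card = t.card := (Finset.card_image_of_injOn hf).symm
  have hcard : Fintype.card {x // x ∈ s} = Fintype.card {x // x ∈ t} := by
    simpa [Fintype.card_coe] using hcardst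
  have hinj : Function.Injective
      (fun a : {x // x ∈ s} => (⟨f a, Finset.mem_image_of_mem f a.2⟩ : {x // x ∈ t})) := by
    rintro ⟨x, hx⟩ ⟨y, hy⟩ h
    exact Subtype.ext (hf hx hy (by simpa using congrArg Subtype.val h))
  have hbij := (Fintype.bijective_iff_injective_and_card _).2 ⟨hinj, hcard⟩
  let e1 : {x // x ∈ s} ≃ {x // x ∈ t} := Equiv.ofBijective _ hbij
  have hcard2 : Fintype.card {x // ¬ x ∈ s} = Fintype.card {x // ¬ x ∈ t} := by
    rw [Fintype.card_subtype_compl, Fintype.card_subtype_compl, hcard]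
  let e2 : {x // ¬ x ∈ s} ≃ {x // ¬ x ∈ t} := Fintype.equivOfCardEq hcard2
  refine ⟨(Equiv.sumCompl (· ∈ s)).symm.trans ((e1.sumCongr e2).trans
    (Equiv.sumCompl (· ∈ t))), fun a ha => ?_⟩
  simp [Equiv.sumCompl_symm_apply_of_pos ha, e1]

lemma permAct_fst (σ : Equiv.Perm (Fin n)) (θ : Param n) (i j : Fin n) :
    (permAct σ θ).1 i j = θ.1 (σ⁻¹ i) (σ⁻¹ j) := by
  show ((σ.permMatrix ℝ)ᵀ * θ.1 * σ.permMatrix ℝ) i j = _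
  have h1 : (σ.permMatrix ℝ)ᵀ = (σ⁻¹).permMatrix ℝ := by
    rw [← PEquiv.toMatrix_symm, ← Equiv.toPEquiv_symm]; rfl
  rw [h1, Equiv.Perm.permMatrix, Equiv.Perm.permMatrix, PEquiv.toMatrix_toPEquiv_mul,
    PEquiv.mul_toMatrix_toPEquiv]
  rfl

lemma permAct_snd (σ : Equiv.Perm (Fin n)) (θ : Param n) (j : Fin n) :
    (permAct σ θ).2 j = θ.2 (σ⁻¹ j) := by
  show ((σ.permMatrix ℝ)ᵀ).mulVec θ.2 j = _
  have h1 : (σ.permMatrix ℝ)ᵀ = (σ⁻¹).permMatrix ℝ := by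
    rw [← PEquiv.toMatrix_symm, ← Equiv.toPEquiv_symm]; rfl
  rw [h1]
  simp [Matrix.mulVec, dotProduct, PEquiv.toMatrix_apply, Equiv.toPEquiv_apply]

lemma mem_pairFinset (Ind : EdgeIdx v ≃ Fin n) (j : Fin n) (x : Fin v) :
    x ∈ pairFinset Ind j ↔ x ∈ (Ind.symm j : Sym2 (Fin v)) := by
  simp [pairFinset]

/-- Representation of an edge index as an unordered pair. -/
lemma edge_repr (Ind : EdgeIdx v ≃ Fin n) (j : Fin n) :
    ∃ a b : Fin v, a ≠ b ∧ (Ind.symm j : Sym2 (Fin v)) = s(a, b) := by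
  obtain ⟨⟨a, b⟩, h⟩ := Quot.exists_rep ((Ind.symm j : Sym2 (Fin v)))
  have h' : (Ind.symm j : Sym2 (Fin v)) = s(a, b) := h.symm
  refine ⟨a, b, ?_, h'⟩
  rintro rfl
  exact (Ind.symm j).2 (h' ▸ Sym2.mk_isDiag_iff.2 rfl)

lemma pairFinset_eq (Ind : EdgeIdx v ≃ Fin n) (j : Fin n) {a b : Fin v}
    (h : (Ind.symm j : Sym2 (Fin v)) = s(a, b)) :
    pairFinset Ind j = {a, b} := by
  ext x
  simp [mem_pairFinset, h, Sym2.mem_iff]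

lemma edge_repr_mem (Ind : EdgeIdx v ≃ Fin n) (j : Fin n) {c : Fin v}
    (hc : c ∈ (Ind.symm j : Sym2 (Fin v))) :
    ∃ a : Fin v, a ≠ c ∧ (Ind.symm j : Sym2 (Fin v)) = s(c, a) := by
  obtain ⟨a, b, hab, h⟩ := edge_repr Ind j
  rw [h, Sym2.mem_iff] at hc
  rcases hc with rfl | rfl
  · exact ⟨b, hab.symm, h⟩
  · exact ⟨a, hab, h.trans (Sym2.eq_swap)⟩

lemma edgeAdj_ne {Ind : EdgeIdx v ≃ Fin n} {j l : Fin n} (h : edgeAdj Ind j l) :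
    j ≠ l := by
  rintro rfl
  obtain ⟨a, b, hab, hr⟩ := edge_repr Ind j
  rw [edgeAdj, pairFinset_eq Ind j hr, Finset.inter_self,
    Finset.card_insert_of_notMem (by simp [hab]), Finset.card_singleton] at h
  omega

end Aux
section Aux2
variable {v n : ℕ}

lemma edgePerm_symm_apply (Ind : EdgeIdx v ≃ Fin n) (φ : Equiv.Perm (Fin v)) (j : Fin n) :
    (Ind.symm (edgePerm Ind φ j) : Sym2 (Fin v)) =
      Sym2.map φ (Ind.symm j : Sym2 (Fin v)) := by
  simp only [edgePerm, Equiv.permCongr_apply, Equiv.symm_apply_apply]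
  rfl

lemma pairFinset_edgePerm (Ind : EdgeIdx v ≃ Fin n) (φ : Equiv.Perm (Fin v)) (j : Fin n) :
    pairFinset Ind (edgePerm Ind φ j) = (pairFinset Ind j).image φ := by
  ext x
  simp [mem_pairFinset, edgePerm_symm_apply, Sym2.mem_map, Finset.mem_image, pairFinset]

lemma edgePerm_preserves (Ind : EdgeIdx v ≃ Fin n) (φ : Equiv.Perm (Fin v)) :
    PreservesEdgeAdj Ind (edgePerm Ind φ) := by
  intro j l
  unfold edgeAdj
  rw [pairFinset_edgePerm, pairFinset_edgePerm, ← Finset.image_inter _ _ φ.injective,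
    Finset.card_image_of_injective _ φ.injective]

/-- If an invariant parameter is given, entries are constant along vertex-induced
edge permutations. -/
lemma invariant_entry {Ind : EdgeIdx v ≃ Fin n} {θ : Param n}
    (h : ∀ π : Equiv.Perm (Fin n), PreservesEdgeAdj Ind π → permAct π θ = θ)
    (φ : Equiv.Perm (Fin v)) (j l : Fin n) :
    θ.1 (edgePerm Ind φ j) (edgePerm Ind φ l) = θ.1 j l ∧
    θ.2 (edgePerm Ind φ j) = θ.2 j := by
  have hinv := h (edgePerm Ind φ) (edgePerm_preserves Ind φ)
  set π := edgePerm Ind φ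
  constructor
  · have := congrFun (congrFun (congrArg Prod.fst hinv) (π j)) (π l)
    rw [permAct_fst] at this
    simpa using this.symm
  · have := congrFun (congrArg Prod.snd hinv) (π j)
    rw [permAct_snd] at this
    simpa using this.symm

lemma exists_perm_two {α : Type*} [Fintype α] [DecidableEq α]
    {a b a' b' : α} (hab : a ≠ b) (hab' : a' ≠ b') :
    ∃ σ : Equiv.Perm α, σ a = a' ∧ σ b = b' := by
  obtain ⟨σ, hσ⟩ := exists_perm_extend_fun {a, b}
    (fun x => if x = a then a' else b')
    (by
      intro x hx y hy hxy
      simp only [Finset.coe_insert, Set.mem_insert_iff, Finset.coe_singleton,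
        Set.mem_singleton_iff] at hx hy
      rcases hx with rfl | rfl <;> rcases hy with rfl | rfl <;>
        beta_reduce at hxy <;> split_ifs at hxy <;> simp_all)
  refine ⟨σ, ?_, ?_⟩
  · rw [hσ a (by simp)]; simp
  · rw [hσ b (by simp)]; simp [hab.symm]

lemma exists_perm_three {α : Type*} [Fintype α] [DecidableEq α]
    {c a b c' a' b' : α} (h1 : c ≠ a) (h2 : c ≠ b) (h3 : a ≠ b)
    (h1' : c' ≠ a') (h2' : c' ≠ b') (h3' : a' ≠ b') :
    ∃ σ : Equiv.Perm α, σ c = c' ∧ σ a = a' ∧ σ b = b' := by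
  obtain ⟨σ, hσ⟩ := exists_perm_extend_fun {c, a, b}
    (fun x => if x = c then c' else if x = a then a' else b')
    (by
      intro x hx y hy hxy
      simp only [Finset.coe_insert, Set.mem_insert_iff, Finset.coe_singleton,
        Set.mem_singleton_iff] at hx hy
      rcases hx with rfl | rfl | rfl <;> rcases hy with rfl | rfl | rfl <;>
        beta_reduce at hxy <;> split_ifs at hxy <;> simp_all)
  refine ⟨σ, ?_, ?_, ?_⟩
  · rw [hσ c (by simp)]; simp
  · rw [hσ a (by simp)]; simp [h1.symm]
  · rw [hσ b (by simp)]; simp [h2.symm, h3.symm]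

lemma exists_perm_four {α : Type*} [Fintype α] [DecidableEq α]
    {a b c d a' b' c' d' : α}
    (h1 : a ≠ b) (h2 : a ≠ c) (h3 : a ≠ d) (h4 : b ≠ c) (h5 : b ≠ d) (h6 : c ≠ d)
    (h1' : a' ≠ b') (h2' : a' ≠ c') (h3' : a' ≠ d') (h4' : b' ≠ c') (h5' : b' ≠ d')
    (h6' : c' ≠ d') :
    ∃ σ : Equiv.Perm α, σ a = a' ∧ σ b = b' ∧ σ c = c' ∧ σ d = d' := by
  obtain ⟨σ, hσ⟩ := exists_perm_extend_fun {a, b, c, d}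
    (fun x => if x = a then a' else if x = b then b' else if x = c then c' else d')
    (by
      intro x hx y hy hxy
      simp only [Finset.coe_insert, Set.mem_insert_iff, Finset.coe_singleton,
        Set.mem_singleton_iff] at hx hy
      rcases hx with rfl | rfl | rfl | rfl <;> rcases hy with rfl | rfl | rfl | rfl <;>
        beta_reduce at hxy <;> split_ifs at hxy <;> simp_all)
  refine ⟨σ, ?_, ?_, ?_, ?_⟩
  · rw [hσ a (by simp)]; simp
  · rw [hσ b (by simp)]; simp [h1.symm]
  · rw [hσ c (by simp)]; simp [h2.symm, h4.symm]
  · rw [hσ d (by simp)]; simp [h3.symm, h5.symm, h6.symm]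

end Aux2
section Aux3
variable {v n : ℕ}

lemma edgePerm_eq_iff (Ind : EdgeIdx v ≃ Fin n) (φ : Equiv.Perm (Fin v)) (j j' : Fin n) :
    edgePerm Ind φ j = j' ↔
      Sym2.map φ (Ind.symm j : Sym2 (Fin v)) = (Ind.symm j' : Sym2 (Fin v)) := by
  rw [← edgePerm_symm_apply]
  constructor
  · intro h; rw [h]
  · intro h
    have := Subtype.ext h
    exact Ind.symm.injective this

lemma pairFinset_inj (Ind : EdgeIdx v ≃ Fin n) {j l : Fin n}
    (h : pairFinset Ind j = pairFinset Ind l) : j = l := by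
  obtain ⟨x, y, hxy, hj⟩ := edge_repr Ind j
  obtain ⟨u, w, huw, hl⟩ := edge_repr Ind l
  rw [pairFinset_eq Ind j hj, pairFinset_eq Ind l hl] at h
  have hu : u = x ∨ u = y := by
    have : u ∈ ({x, y} : Finset (Fin v)) := h ▸ (by simp)
    simpa using this
  have hw : w = x ∨ w = y := by
    have : w ∈ ({x, y} : Finset (Fin v)) := h ▸ (by simp)
    simpa using this
  have : (Ind.symm j : Sym2 (Fin v)) = (Ind.symm l : Sym2 (Fin v)) := by
    rw [hj, hl]
    rcases hu with rfl | rfl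
    · rcases hw with rfl | rfl
      · exact absurd rfl huw
      · rfl
    · rcases hw with rfl | rfl
      · exact Sym2.eq_swap.symm
      · exact absurd rfl huw
  exact Ind.symm.injective (Subtype.ext this)

lemma inter_card_le_one (Ind : EdgeIdx v ≃ Fin n) {j l : Fin n} (hjl : j ≠ l) :
    (pairFinset Ind j ∩ pairFinset Ind l).card ≤ 1 := by
  rw [Finset.card_le_one]
  intro a ha b hb
  by_contra hab
  obtain ⟨x, y, hxy, hj⟩ := edge_repr Ind j
  obtain ⟨u, w, huw, hl⟩ := edge_repr Ind l
  have haj := Finset.mem_of_mem_inter_left ha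
  have hbj := Finset.mem_of_mem_inter_left hb
  have hal := Finset.mem_of_mem_inter_right ha
  have hbl := Finset.mem_of_mem_inter_right hb
  have hsub1 : ({a, b} : Finset (Fin v)) ⊆ pairFinset Ind j := by
    intro z hz; simp at hz; rcases hz with rfl | rfl <;> assumption
  have hsub2 : ({a, b} : Finset (Fin v)) ⊆ pairFinset Ind l := by
    intro z hz; simp at hz; rcases hz with rfl | rfl <;> assumption
  have hcj : (pairFinset Ind j).card = 2 := by
    rw [pairFinset_eq Ind j hj]
    rw [Finset.card_insert_of_notMem (by simp [hxy]), Finset.card_singleton]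
  have hcl : (pairFinset Ind l).card = 2 := by
    rw [pairFinset_eq Ind l hl]
    rw [Finset.card_insert_of_notMem (by simp [huw]), Finset.card_singleton]
  have hab2 : ({a, b} : Finset (Fin v)).card = 2 := by
    rw [Finset.card_insert_of_notMem (by simp [hab]), Finset.card_singleton]
  have e1 : ({a, b} : Finset (Fin v)) = pairFinset Ind j :=
    Finset.eq_of_subset_of_card_le hsub1 (by omega)
  have e2 : ({a, b} : Finset (Fin v)) = pairFinset Ind l :=
    Finset.eq_of_subset_of_card_le hsub2 (by omega)
  exact hjl (pairFinset_inj Ind (e1 ▸ e2))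

lemma exists_edgePerm_single (Ind : EdgeIdx v ≃ Fin n) (j j' : Fin n) :
    ∃ φ : Equiv.Perm (Fin v), edgePerm Ind φ j = j' := by
  obtain ⟨a, b, hab, hj⟩ := edge_repr Ind j
  obtain ⟨a', b', hab', hj'⟩ := edge_repr Ind j'
  obtain ⟨σ, h1, h2⟩ := exists_perm_two hab hab'
  exact ⟨σ, (edgePerm_eq_iff Ind σ j j').2 (by rw [hj, hj', Sym2.map_pair_eq, h1, h2])⟩

lemma exists_edgePerm_pair (Ind : EdgeIdx v ≃ Fin n) {j l j' l' : Fin n}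
    (hjl : j ≠ l) (hjl' : j' ≠ l') (hadj : edgeAdj Ind j l ↔ edgeAdj Ind j' l') :
    ∃ φ : Equiv.Perm (Fin v), edgePerm Ind φ j = j' ∧ edgePerm Ind φ l = l' := by
  by_cases hA : edgeAdj Ind j l
  · have hA' : edgeAdj Ind j' l' := hadj.1 hA
    obtain ⟨c, hc⟩ := Finset.card_eq_one.mp hA
    obtain ⟨c', hc'⟩ := Finset.card_eq_one.mp hA'
    have hcj : c ∈ (Ind.symm j : Sym2 (Fin v)) :=
      (mem_pairFinset Ind j c).1 (Finset.mem_of_mem_inter_left (hc ▸ Finset.mem_singleton_self c))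
    have hcl : c ∈ (Ind.symm l : Sym2 (Fin v)) :=
      (mem_pairFinset Ind l c).1 (Finset.mem_of_mem_inter_right (hc ▸ Finset.mem_singleton_self c))
    have hcj' : c' ∈ (Ind.symm j' : Sym2 (Fin v)) :=
      (mem_pairFinset Ind j' c').1
        (Finset.mem_of_mem_inter_left (hc' ▸ Finset.mem_singleton_self c'))
    have hcl' : c' ∈ (Ind.symm l' : Sym2 (Fin v)) :=
      (mem_pairFinset Ind l' c').1
        (Finset.mem_of_mem_inter_right (hc' ▸ Finset.mem_singleton_self c'))
    obtain ⟨a, ha, hja⟩ := edge_repr_mem Ind j hcj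
    obtain ⟨b, hb, hlb⟩ := edge_repr_mem Ind l hcl
    obtain ⟨a', ha', hja'⟩ := edge_repr_mem Ind j' hcj'
    obtain ⟨b', hb', hlb'⟩ := edge_repr_mem Ind l' hcl'
    have hab : a ≠ b := by
      rintro rfl
      exact hjl (Ind.symm.injective (Subtype.ext (hja.trans hlb.symm)))
    have hab' : a' ≠ b' := by
      rintro rfl
      exact hjl' (Ind.symm.injective (Subtype.ext (hja'.trans hlb'.symm)))
    obtain ⟨σ, h1, h2, h3⟩ := exists_perm_three (Ne.symm ha) (Ne.symm hb) hab
      (Ne.symm ha') (Ne.symm hb') hab'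
    refine ⟨σ, (edgePerm_eq_iff Ind σ j j').2 ?_, (edgePerm_eq_iff Ind σ l l').2 ?_⟩
    · rw [hja, hja', Sym2.map_pair_eq, h1, h2]
    · rw [hlb, hlb', Sym2.map_pair_eq, h1, h3]
  · have hA' : ¬ edgeAdj Ind j' l' := fun h => hA (hadj.2 h)
    have hdisj : ∀ z : Fin v,
        ¬ (z ∈ pairFinset Ind j ∧ z ∈ pairFinset Ind l) := by
      intro z hz
      have hle := inter_card_le_one Ind hjl
      have hmem : z ∈ pairFinset Ind j ∩ pairFinset Ind l := Finset.mem_inter.2 hz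
      have : (pairFinset Ind j ∩ pairFinset Ind l).card = 1 := by
        have := Finset.card_pos.2 ⟨z, hmem⟩
        omega
      exact hA this
    have hdisj' : ∀ z : Fin v,
        ¬ (z ∈ pairFinset Ind j' ∧ z ∈ pairFinset Ind l') := by
      intro z hz
      have hle := inter_card_le_one Ind hjl'
      have hmem : z ∈ pairFinset Ind j' ∩ pairFinset Ind l' := Finset.mem_inter.2 hz
      have : (pairFinset Ind j' ∩ pairFinset Ind l').card = 1 := by
        have := Finset.card_pos.2 ⟨z, hmem⟩
        omega
      exact hA' this
    obtain ⟨x, y, hxy, hj⟩ := edge_repr Ind j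
    obtain ⟨u, w, huw, hl⟩ := edge_repr Ind l
    obtain ⟨x', y', hxy', hj'⟩ := edge_repr Ind j'
    obtain ⟨u', w', huw', hl'⟩ := edge_repr Ind l'
    rw [pairFinset_eq Ind j hj, pairFinset_eq Ind l hl] at hdisj
    rw [pairFinset_eq Ind j' hj', pairFinset_eq Ind l' hl'] at hdisj'
    have d1 : x ≠ u := fun h => hdisj x ⟨by simp, by simp [h]⟩
    have d2 : x ≠ w := fun h => hdisj x ⟨by simp, by simp [h]⟩
    have d3 : y ≠ u := fun h => hdisj y ⟨by simp, by simp [h]⟩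
    have d4 : y ≠ w := fun h => hdisj y ⟨by simp, by simp [h]⟩
    have d1' : x' ≠ u' := fun h => hdisj' x' ⟨by simp, by simp [h]⟩
    have d2' : x' ≠ w' := fun h => hdisj' x' ⟨by simp, by simp [h]⟩
    have d3' : y' ≠ u' := fun h => hdisj' y' ⟨by simp, by simp [h]⟩
    have d4' : y' ≠ w' := fun h => hdisj' y' ⟨by simp, by simp [h]⟩
    obtain ⟨σ, h1, h2, h3, h4⟩ := exists_perm_four hxy d1 d2 d3 d4 huw
      hxy' d1' d2' d3' d4' huw'
    refine ⟨σ, (edgePerm_eq_iff Ind σ j j').2 ?_, (edgePerm_eq_iff Ind σ l l').2 ?_⟩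
    · rw [hj, hj', Sym2.map_pair_eq, h1, h2]
    · rw [hl, hl', Sym2.map_pair_eq, h3, h4]

end Aux3
theorem invariant_iff_Fmap {v n : ℕ} (hv : 2 ≤ v) (Ind : EdgeIdx v ≃ Fin n)
    (θ : Param n) (hθ : IsHopfieldParam θ) :
    (∀ π : Equiv.Perm (Fin n), PreservesEdgeAdj Ind π → permAct π θ = θ) ↔
    (∃ β : ℝ × ℝ × ℝ, θ = Fmap Ind β) := by
  constructor
  · intro h
    classical
    have hx01 : (⟨0, by omega⟩ : Fin v) ≠ ⟨1, by omega⟩ := by simp [Fin.ext_iff]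
    set e0 : EdgeIdx v := ⟨s(⟨0, by omega⟩, ⟨1, by omega⟩),
      by rw [Sym2.mk_isDiag_iff]; exact hx01⟩ with he0
    set j0 : Fin n := Ind e0 with hj0
    have key : ∀ (j l j' l' : Fin n), j ≠ l → j' ≠ l' →
        (edgeAdj Ind j l ↔ edgeAdj Ind j' l') → θ.1 j l = θ.1 j' l' := by
      intro j l j' l' hjl hjl' hadj
      obtain ⟨φ, h1, h2⟩ := exists_edgePerm_pair Ind hjl hjl' hadj
      have := (invariant_entry h φ j l).1
      rw [h1, h2] at this
      exact this.symm
    have keyb : ∀ j j' : Fin n, θ.2 j = θ.2 j' := by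
      intro j j'
      obtain ⟨φ, h1⟩ := exists_edgePerm_single Ind j j'
      have := (invariant_entry h φ j j).2
      rw [h1] at this
      exact this.symm
    set B1 : ℝ := if hA : ∃ p : Fin n × Fin n, edgeAdj Ind p.1 p.2
      then θ.1 hA.choose.1 hA.choose.2 else 0 with hB1
    set B2 : ℝ := if hB : ∃ p : Fin n × Fin n, p.1 ≠ p.2 ∧ ¬ edgeAdj Ind p.1 p.2
      then θ.1 hB.choose.1 hB.choose.2 else 0 with hB2
    refine ⟨(B1, B2, θ.2 j0), ?_⟩
    have h1 : θ.1 = (Fmap Ind (B1, B2, θ.2 j0)).1 := by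
      ext i j
      show θ.1 i j = if i = j then 0 else if edgeAdj Ind i j then B1 else B2
      by_cases hij : i = j
      · subst hij; simp [hθ.2 i]
      · by_cases hadj : edgeAdj Ind i j
        · rw [if_neg hij, if_pos hadj]
          have hA : ∃ p : Fin n × Fin n, edgeAdj Ind p.1 p.2 := ⟨(i, j), hadj⟩
          rw [hB1, dif_pos hA]
          exact key i j hA.choose.1 hA.choose.2 hij (edgeAdj_ne hA.choose_spec)
            (by simp [hadj, hA.choose_spec])
        · rw [if_neg hij, if_neg hadj]
          have hB : ∃ p : Fin n × Fin n, p.1 ≠ p.2 ∧ ¬ edgeAdj Ind p.1 p.2 :=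
            ⟨(i, j), hij, hadj⟩
          rw [hB2, dif_pos hB]
          exact key i j hB.choose.1 hB.choose.2 hij hB.choose_spec.1
            (by simp [hadj, hB.choose_spec.2])
    have h2 : θ.2 = (Fmap Ind (B1, B2, θ.2 j0)).2 := by
      funext j
      exact keyb j j0
    exact Prod.ext h1 h2
  · rintro ⟨β, rfl⟩ π hπ
    have h1 : (permAct π (Fmap Ind β)).1 = (Fmap Ind β).1 := by
      ext i j
      rw [permAct_fst]
      have hne : π⁻¹ i = π⁻¹ j ↔ i = j := (Equiv.injective π⁻¹).eq_iff
      have hadj : edgeAdj Ind (π⁻¹ i) (π⁻¹ j) ↔ edgeAdj Ind i j := by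
        have := hπ (π⁻¹ i) (π⁻¹ j)
        rw [show π (π⁻¹ i) = i from π.apply_symm_apply i,
          show π (π⁻¹ j) = j from π.apply_symm_apply j] at this
        exact this.symm
      show (if π⁻¹ i = π⁻¹ j then (0:ℝ) else
          if edgeAdj Ind (π⁻¹ i) (π⁻¹ j) then β.1 else β.2.1) =
        if i = j then 0 else if edgeAdj Ind i j then β.1 else β.2.1
      rw [if_congr hne rfl (if_congr hadj rfl rfl)]
    have h2 : (permAct π (Fmap Ind β)).2 = (Fmap Ind β).2 := by
      funext j
      rw [permAct_snd]
      rfl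
    exact Prod.ext h1 h2

end HopfieldPaper
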